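/- Let τ > 0, 0 < p_a' ≤ p_a, and f_τ(t) = p_a + (t/(τ - 1 + e^{-τ}))(p_a' - p_a), with q(t) the solution of dq/dt = f_τ(t) - q(t), q(0) = p_a. Then dq/dt(t) = ((1 - e^{-t})/(τ - 1 + e^{-τ}))(p_a' - p_a) ≤ 0 for all t ∈ [0, τ]. -/

import Mathlib

theorem stmt_6 (τ pa pa' : ℝ) (hτ : 0 < τ) (hpa' : 0 < pa') (hle : pa' ≤ pa)
    (f : ℝ → ℝ) (hf : ∀ t, f t = pa + (t / (τ - 1 + Real.exp (-τ))) * (pa' - pa))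
    (q : ℝ → ℝ)
    (hq : ∀ t ∈ Set.Icc (0:ℝ) τ, HasDerivAt q (f t - q t) t)
    (hq0 : q 0 = pa) :
    ∀ t ∈ Set.Icc (0:ℝ) τ,
      HasDerivAt q (((1 - Real.exp (-t)) / (τ - 1 + Real.exp (-τ))) * (pa' - pa)) t ∧
      ((1 - Real.exp (-t)) / (τ - 1 + Real.exp (-τ))) * (pa' - pa) ≤ 0 := by
  set D : ℝ := τ - 1 + Real.exp (-τ) with hDdef
  have hD : 0 < D := by
    have h1 : (-τ) + 1 < Real.exp (-τ) := Real.add_one_lt_exp (by linarith)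
    simp only [hDdef]; linarith
  set c : ℝ := (pa' - pa) / D with hcdef
  set h : ℝ → ℝ := fun t => Real.exp t * q t -
      (pa * Real.exp t + c * (t * Real.exp t - Real.exp t)) with hhdef
  have hderiv : ∀ t ∈ Set.Icc (0:ℝ) τ, HasDerivAt h 0 t := by
    intro t ht
    have h1 : HasDerivAt (fun t => Real.exp t * q t)
        (Real.exp t * q t + Real.exp t * (f t - q t)) t :=
      (Real.hasDerivAt_exp t).mul (hq t ht)
    have h2 : HasDerivAt (fun t => pa * Real.exp t + c * (t * Real.exp t - Real.exp t))
        (pa * Real.exp t + c * ((1 * Real.exp t + t * Real.exp t) - Real.exp t)) t := by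
      exact ((Real.hasDerivAt_exp t).const_mul pa).add
        ((((hasDerivAt_id t).mul (Real.hasDerivAt_exp t)).sub
          (Real.hasDerivAt_exp t)).const_mul c)
    have := h1.sub h2
    refine this.congr_deriv ?_
    rw [hf t]
    have : t / D * (pa' - pa) = c * t := by rw [hcdef]; ring
    rw [this]; ring
  have hcont : ContinuousOn h (Set.Icc 0 τ) := fun t ht =>
    ((hderiv t ht).continuousAt).continuousWithinAt
  have hconst : ∀ t ∈ Set.Icc (0:ℝ) τ, h t = c := by
    have h0 : h 0 = c := by
      simp [hhdef, hq0, Real.exp_zero]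
    intro t ht
    have := eq_of_has_deriv_right_eq (f' := fun _ => (0:ℝ))
      (fun x hx => (hderiv x (Set.mem_Icc_of_Ico hx)).hasDerivWithinAt)
      (g := fun _ => c)
      (fun x hx => (hasDerivAt_const x c).hasDerivWithinAt)
      hcont continuousOn_const (by simpa using h0) t ht
    simpa using this
  have hqval : ∀ t ∈ Set.Icc (0:ℝ) τ, q t = pa + c * (t - 1 + Real.exp (-t)) := by
    intro t ht
    have hc := hconst t ht
    have he : Real.exp t ≠ 0 := Real.exp_ne_zero t
    have hexp : Real.exp (-t) = (Real.exp t)⁻¹ := Real.exp_neg t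
    rw [hhdef] at hc
    simp only at hc
    rw [hexp]
    field_simp
    nlinarith [hc]
  intro t ht
  have hkey : f t - q t = (1 - Real.exp (-t)) / D * (pa' - pa) := by
    rw [hf t, hqval t ht, hcdef]
    field_simp
    ring
  constructor
  · have := hq t ht
    rwa [hkey] at this
  · apply mul_nonpos_of_nonneg_of_nonpos
    · apply div_nonneg _ hD.le
      have : Real.exp (-t) ≤ 1 := Real.exp_le_one_iff.mpr (by linarith [ht.1])
      linarith
    · linarith
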